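/- Let E be a finite meet-semilattice and let A be the unitization over ℂ of the semigroup algebra MonoidAlgebra ℂ E. For e ∈ E set p_e := e · ∏_{f ∈ E, e ⊓ f ≠ e} (1 − f) ∈ A. Then the element u := ∑_{e ∈ E} p_e satisfies u · f = f in A for every f ∈ E; that is, u is a multiplicative identity for the linear span of E in A. -/

import Mathlib

instance semilatticeInfCommSemigroup (E : Type*) [SemilatticeInf E] : CommSemigroup E where
  mul := (· ⊓ ·)
  mul_assoc := inf_assoc
  mul_comm := inf_comm

noncomputable def semilatticeBasis {E : Type*} [SemilatticeInf E] (e : E) :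
    Unitization ℂ (MonoidAlgebra ℂ E) :=
  Unitization.inr (MonoidAlgebra.single e (1 : ℂ))

noncomputable def minProj {E : Type*} [SemilatticeInf E] [Fintype E] [DecidableEq E] (e : E) :
    Unitization ℂ (MonoidAlgebra ℂ E) :=
  semilatticeBasis e *
    ∏ f ∈ Finset.univ.filter (fun f => e ⊓ f ≠ e), (1 - semilatticeBasis f)

open scoped Classical

section aux
variable {E : Type*} [SemilatticeInf E]

lemma sb_mul (e g : E) : semilatticeBasis e * semilatticeBasis g = semilatticeBasis (e ⊓ g) := by
  unfold semilatticeBasis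
  rw [← Unitization.inr_mul, MonoidAlgebra.single_mul_single, one_mul]
  rfl

lemma sub_idem (g : E) :
    (1 - semilatticeBasis g) * (1 - semilatticeBasis g) = 1 - semilatticeBasis g := by
  have h := sb_mul g g
  rw [inf_idem] at h
  have h2 : (1 - semilatticeBasis g) * (1 - semilatticeBasis g)
      = 1 - 2 * semilatticeBasis g + semilatticeBasis g * semilatticeBasis g := by ring
  rw [h2, h]; ring

variable [DecidableEq E]

lemma prod_absorb {S : Finset E} {x : E} (hx : x ∈ S) :
    (∏ g ∈ S, (1 - semilatticeBasis g)) * (1 - semilatticeBasis x) =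
      ∏ g ∈ S, (1 - semilatticeBasis g) := by
  rw [← Finset.mul_prod_erase S _ hx]
  have h : (1 - semilatticeBasis x) * (∏ g ∈ S.erase x, (1 - semilatticeBasis g)) *
      (1 - semilatticeBasis x) = ((1 - semilatticeBasis x) * (1 - semilatticeBasis x)) *
      ∏ g ∈ S.erase x, (1 - semilatticeBasis g) := by ring
  rw [h, sub_idem]

lemma prod_mul_self_zero {S : Finset E} {x : E} (hx : x ∈ S) :
    (∏ g ∈ S, (1 - semilatticeBasis g)) * semilatticeBasis x = 0 := by
  rw [← Finset.mul_prod_erase S _ hx, mul_comm (1 - semilatticeBasis x), mul_assoc]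
  have h : (1 - semilatticeBasis x) * semilatticeBasis x = 0 := by
    have h := sb_mul x x
    rw [inf_idem] at h
    rw [sub_mul, one_mul, h, sub_self]
  rw [h, mul_zero]

lemma coll (e : E) (S : Finset E) :
    semilatticeBasis e * ∏ g ∈ S, (1 - semilatticeBasis g) =
      semilatticeBasis e * ∏ g ∈ S.image (fun g => e ⊓ g), (1 - semilatticeBasis g) := by
  induction S using Finset.induction with
  | empty => simp
  | @insert g S hg ih =>
    rw [Finset.prod_insert hg]
    have h1 : semilatticeBasis e * (1 - semilatticeBasis g)
        = semilatticeBasis e * (1 - semilatticeBasis (e ⊓ g)) := by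
      rw [mul_sub, mul_sub, sb_mul, sb_mul, ← inf_assoc, inf_idem]
    have step : semilatticeBasis e * ((1 - semilatticeBasis g) * ∏ x ∈ S, (1 - semilatticeBasis x))
        = (1 - semilatticeBasis (e ⊓ g)) * (semilatticeBasis e * ∏ x ∈ S, (1 - semilatticeBasis x)) := by
      calc semilatticeBasis e * ((1 - semilatticeBasis g) * ∏ x ∈ S, (1 - semilatticeBasis x))
          = (semilatticeBasis e * (1 - semilatticeBasis g)) * ∏ x ∈ S, (1 - semilatticeBasis x) := by
            ring
        _ = (semilatticeBasis e * (1 - semilatticeBasis (e ⊓ g))) * ∏ x ∈ S, (1 - semilatticeBasis x) := by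
            rw [h1]
        _ = (1 - semilatticeBasis (e ⊓ g)) * (semilatticeBasis e * ∏ x ∈ S, (1 - semilatticeBasis x)) := by
            ring
    rw [step, ih, Finset.image_insert]
    by_cases hmem : e ⊓ g ∈ S.image (fun g => e ⊓ g)
    · rw [Finset.insert_eq_self.mpr hmem]
      have h2 : (1 - semilatticeBasis (e ⊓ g)) *
          (semilatticeBasis e * ∏ x ∈ S.image (fun g => e ⊓ g), (1 - semilatticeBasis x))
          = semilatticeBasis e *
            ((∏ x ∈ S.image (fun g => e ⊓ g), (1 - semilatticeBasis x)) *
              (1 - semilatticeBasis (e ⊓ g))) := by ring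
      rw [h2, prod_absorb hmem]
    · rw [Finset.prod_insert hmem]; ring

end aux

section aux2
variable {E : Type*} [SemilatticeInf E] [Fintype E] [DecidableEq E]

lemma img1 (m : E) :
    (Finset.univ.filter (fun g => m ⊓ g ≠ m)).image (fun g => m ⊓ g) =
      Finset.univ.filter (fun g => g < m) := by
  ext x
  simp only [Finset.mem_image, Finset.mem_filter, Finset.mem_univ, true_and]
  constructor
  · rintro ⟨g, hg, rfl⟩
    exact lt_of_le_of_ne inf_le_left hg
  · intro hx
    exact ⟨x, by rw [inf_eq_right.mpr hx.le]; exact hx.ne, inf_eq_right.mpr hx.le⟩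

lemma minProj_eq (m : E) :
    minProj m = semilatticeBasis m *
      ∏ g ∈ Finset.univ.filter (fun g => g < m), (1 - semilatticeBasis g) := by
  rw [minProj, coll, img1]

lemma key (f : E) (S : Finset E) (hS1 : ∀ e ∈ S, e < f) (hS2 : ∀ m ∈ S, ∀ g, g < m → g ∈ S) :
    semilatticeBasis f * ∏ e ∈ S, (1 - semilatticeBasis e) =
      semilatticeBasis f - ∑ e ∈ S, minProj e := by
  induction S using Finset.strongInduction with
  | _ S ih =>
    rcases S.eq_empty_or_nonempty with rfl | hne
    · simp
    obtain ⟨m, hmS, hmax⟩ := S.exists_maximal hne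
    set S' := S.erase m with hS'def
    have hsub : S' ⊂ S := Finset.erase_ssubset hmS
    have hS1' : ∀ e ∈ S', e < f := fun e he => hS1 e (Finset.mem_of_mem_erase he)
    have hS2' : ∀ m' ∈ S', ∀ g, g < m' → g ∈ S' := by
      intro m' hm' g hg
      have hm'S := Finset.mem_of_mem_erase hm'
      refine Finset.mem_erase.mpr ⟨?_, hS2 m' hm'S g hg⟩
      rintro rfl
      exact absurd (hmax hm'S hg.le) (not_le_of_gt hg)
    have IH := ih S' hsub hS1' hS2'
    have hprod : ∏ e ∈ S, (1 - semilatticeBasis e) =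
        (1 - semilatticeBasis m) * ∏ e ∈ S', (1 - semilatticeBasis e) :=
      (Finset.mul_prod_erase S _ hmS).symm
    have himg : S'.image (fun g => m ⊓ g) = Finset.univ.filter (fun g => g < m) := by
      ext x
      simp only [Finset.mem_image, Finset.mem_filter, Finset.mem_univ, true_and]
      constructor
      · rintro ⟨g, hg, rfl⟩
        have hgS := Finset.mem_of_mem_erase hg
        have hne' : ¬ m ≤ g := by
          intro hle
          rcases eq_or_lt_of_le hle with h | h
          · exact (Finset.mem_erase.mp hg).1 h.symm
          · exact absurd (hmax hgS h.le) (not_le_of_gt h)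
        refine lt_of_le_of_ne inf_le_left ?_
        intro h
        exact hne' (by rw [← h]; exact inf_le_right)
      · intro hx
        exact ⟨x, Finset.mem_erase.mpr ⟨hx.ne, hS2 m hmS x hx⟩, inf_eq_right.mpr hx.le⟩
    have hm_eq : semilatticeBasis m * ∏ e ∈ S', (1 - semilatticeBasis e) = minProj m := by
      rw [coll, himg, minProj_eq]
    have hsum : ∑ e ∈ S, minProj e = minProj m + ∑ e ∈ S', minProj e :=
      (Finset.add_sum_erase S _ hmS).symm
    have habsorb : semilatticeBasis f * semilatticeBasis m = semilatticeBasis m := by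
      rw [sb_mul, inf_eq_right.mpr (hS1 m hmS).le]
    calc semilatticeBasis f * ∏ e ∈ S, (1 - semilatticeBasis e)
        = semilatticeBasis f * ∏ e ∈ S', (1 - semilatticeBasis e)
          - (semilatticeBasis f * semilatticeBasis m) * ∏ e ∈ S', (1 - semilatticeBasis e) := by
          rw [hprod]; ring
      _ = (semilatticeBasis f - ∑ e ∈ S', minProj e) - minProj m := by
          rw [IH, habsorb, hm_eq]
      _ = semilatticeBasis f - ∑ e ∈ S, minProj e := by rw [hsum]; ring

lemma main_sum (f : E) :
    ∑ e ∈ Finset.univ.filter (fun e => e ≤ f), minProj e = semilatticeBasis f := by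
  have hkey := key f (Finset.univ.filter (fun e => e < f))
    (fun e he => (Finset.mem_filter.mp he).2)
    (fun m hm g hg =>
      Finset.mem_filter.mpr ⟨Finset.mem_univ g, hg.trans (Finset.mem_filter.mp hm).2⟩)
  have hf : minProj f = semilatticeBasis f -
      ∑ e ∈ Finset.univ.filter (fun e => e < f), minProj e := by
    rw [minProj_eq, hkey]
  have hsplit : Finset.univ.filter (fun e => e ≤ f) =
      insert f (Finset.univ.filter (fun e => e < f)) := by
    ext x
    simp only [Finset.mem_filter, Finset.mem_univ, true_and, Finset.mem_insert]
    constructor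
    · intro h
      rcases eq_or_lt_of_le h with h | h
      · exact Or.inl h
      · exact Or.inr h
    · rintro (rfl | h)
      · exact le_rfl
      · exact h.le
  rw [hsplit, Finset.sum_insert (by simp), hf]
  ring

end aux2

theorem stmt_6 {E : Type*} [SemilatticeInf E] [Fintype E] [DecidableEq E] (f : E) :
    (∑ e : E, minProj e) * semilatticeBasis f = semilatticeBasis f := by
  rw [Finset.sum_mul]
  have h : ∀ e : E, minProj e * semilatticeBasis f =
      if e ≤ f then minProj e else 0 := by
    intro e
    by_cases he : e ≤ f
    · rw [if_pos he, minProj]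
      have h2 : semilatticeBasis e *
          (∏ g ∈ Finset.univ.filter (fun g => e ⊓ g ≠ e), (1 - semilatticeBasis g)) *
          semilatticeBasis f = (semilatticeBasis e * semilatticeBasis f) *
          ∏ g ∈ Finset.univ.filter (fun g => e ⊓ g ≠ e), (1 - semilatticeBasis g) := by ring
      rw [h2, sb_mul, inf_eq_left.mpr he]
    · rw [if_neg he, minProj, mul_assoc,
        prod_mul_self_zero
          (Finset.mem_filter.mpr ⟨Finset.mem_univ f, fun h => he (inf_eq_left.mp h)⟩),
        mul_zero]
  calc ∑ e : E, minProj e * semilatticeBasis f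
      = ∑ e : E, if e ≤ f then minProj e else 0 := Finset.sum_congr rfl (fun e _ => h e)
    _ = ∑ e ∈ Finset.univ.filter (fun e => e ≤ f), minProj e := (Finset.sum_filter _ _).symm
    _ = semilatticeBasis f := main_sum f
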